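/- arXiv:1309.0680 — 3 statements merged into one kernel-verified Lean document; each statement's English description precedes it below -/
import Mathlib

section
/- Let G be a Berge graph with a 2-join (X1,X2) with split (X1,X2,A1,B1,A2,B2), and let i ∈ {1,2}. Then every induced path of length at least 2 with both ends in A_i and no interior vertex in A_i ∪ B_i or in the other side beyond what the 2-join forces (i.e., an outgoing path from A_i to A_i) has even length; similarly for B_i. -/
open SimpleGraph

universe u

namespace BSP

variable {V : Type*}

/-- A walk is induced: any two adjacent vertices of its support are consecutive on it. -/
def IsInducedWalk (G : SimpleGraph V) {u v : V} (p : G.Walk u v) : Prop :=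
  ∀ x ∈ p.support, ∀ y ∈ p.support, G.Adj x y → s(x, y) ∈ p.edges

/-- An induced path. -/
def IsInducedPath (G : SimpleGraph V) {u v : V} (p : G.Walk u v) : Prop :=
  p.IsPath ∧ IsInducedWalk G p

/-- An induced cycle. -/
def IsInducedCycle (G : SimpleGraph V) {u : V} (p : G.Walk u u) : Prop :=
  p.IsCycle ∧ IsInducedWalk G p

/-- `G` has an odd hole: an induced odd cycle of length at least 5. -/
def HasOddHole (G : SimpleGraph V) : Prop :=
  ∃ (u : V) (p : G.Walk u u), IsInducedCycle G p ∧ Odd p.length ∧ 5 ≤ p.length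

/-- A graph is Berge if neither it nor its complement has an odd hole. -/
def Berge (G : SimpleGraph V) : Prop := ¬ HasOddHole G ∧ ¬ HasOddHole Gᶜ

/-- `x` is an interior vertex of the walk `p`. -/
def Interior {G : SimpleGraph V} {u v : V} (p : G.Walk u v) (x : V) : Prop :=
  x ∈ p.support ∧ x ≠ u ∧ x ≠ v

/-- A skew partition `(A, B)` of `G`. -/
def IsSkewPartition (G : SimpleGraph V) (A B : Set V) : Prop :=
  A.Nonempty ∧ B.Nonempty ∧ Disjoint A B ∧ A ∪ B = Set.univ ∧
  ¬ (G.induce A).Connected ∧ ¬ ((Gᶜ).induce B).Connected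

/-- A balanced skew partition. -/
def IsBalancedSkewPartition (G : SimpleGraph V) (A B : Set V) : Prop :=
  IsSkewPartition G A B ∧
  (∀ (x y : V) (p : G.Walk x y), IsInducedPath G p → 2 ≤ p.length →
     x ∈ B → y ∈ B → (∀ z, Interior p z → z ∈ A) → Even p.length) ∧
  (∀ (x y : V) (q : (Gᶜ).Walk x y), IsInducedPath Gᶜ q → 2 ≤ q.length →
     x ∈ A → y ∈ A → (∀ z, Interior q z → z ∈ B) → Even q.length)

def HasBalancedSkewPartition (G : SimpleGraph V) : Prop :=
  ∃ A B : Set V, IsBalancedSkewPartition G A B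

def IsSkewCutset (G : SimpleGraph V) (B : Set V) : Prop :=
  IsSkewPartition G Bᶜ B

def IsBalancedSkewCutset (G : SimpleGraph V) (B : Set V) : Prop :=
  IsBalancedSkewPartition G Bᶜ B

/-- `C` is a cutset of `G`. -/
def IsCutset (G : SimpleGraph V) (C : Set V) : Prop :=
  ¬ (G.induce (Cᶜ : Set V)).Connected

/-- A star: a set with a vertex adjacent to all the others in it. -/
def IsStar (G : SimpleGraph V) (B : Set V) : Prop :=
  ∃ x ∈ B, ∀ y ∈ B, y ≠ x → G.Adj x y

def HasStarCutset (G : SimpleGraph V) : Prop :=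
  ∃ B : Set V, IsStar G B ∧ IsCutset G B

/-- A 2-join of `G` with split `(X1, X2, A1, B1, A2, B2)`. -/
def IsTwoJoinSplit (G : SimpleGraph V) (X1 X2 A1 B1 A2 B2 : Set V) : Prop :=
  Disjoint X1 X2 ∧ X1 ∪ X2 = Set.univ ∧
  A1 ⊆ X1 ∧ B1 ⊆ X1 ∧ A2 ⊆ X2 ∧ B2 ⊆ X2 ∧
  Disjoint A1 B1 ∧ Disjoint A2 B2 ∧
  A1.Nonempty ∧ B1.Nonempty ∧ A2.Nonempty ∧ B2.Nonempty ∧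
  (∀ a1 ∈ A1, ∀ a2 ∈ A2, G.Adj a1 a2) ∧
  (∀ b1 ∈ B1, ∀ b2 ∈ B2, G.Adj b1 b2) ∧
  (∀ x ∈ X1, ∀ y ∈ X2, G.Adj x y → (x ∈ A1 ∧ y ∈ A2) ∨ (x ∈ B1 ∧ y ∈ B2))

/-- Reachability inside a set of vertices. -/
def ReachIn (G : SimpleGraph V) (S : Set V) (u v : V) : Prop :=
  ∃ p : G.Walk u v, ∀ x ∈ p.support, x ∈ S

/-- Every component of `G[X]` meets both `A` and `B`. -/
def SideConnected (G : SimpleGraph V) (X A B : Set V) : Prop :=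
  ∀ v ∈ X, (∃ a ∈ A, ReachIn G X v a) ∧ (∃ b ∈ B, ReachIn G X v b)

def IsConnectedTwoJoin (G : SimpleGraph V) (X1 X2 A1 B1 A2 B2 : Set V) : Prop :=
  IsTwoJoinSplit G X1 X2 A1 B1 A2 B2 ∧
  SideConnected G X1 A1 B1 ∧ SideConnected G X2 A2 B2

/-- `X` has at least 3 vertices and is not a path of length 2 from `A` to `B`
with interior in `X \ (A ∪ B)`. -/
def SideSubstantial (G : SimpleGraph V) (X A B : Set V) : Prop :=
  3 ≤ X.ncard ∧
  ¬ ∃ a ∈ A, ∃ b ∈ B, ∃ c ∈ X \ (A ∪ B),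
      X = {a, c, b} ∧ G.Adj a c ∧ G.Adj c b ∧ ¬ G.Adj a b

def IsSubstantialTwoJoin (G : SimpleGraph V) (X1 X2 A1 B1 A2 B2 : Set V) : Prop :=
  IsTwoJoinSplit G X1 X2 A1 B1 A2 B2 ∧
  SideSubstantial G X1 A1 B1 ∧ SideSubstantial G X2 A2 B2

def IsProperTwoJoin (G : SimpleGraph V) (X1 X2 A1 B1 A2 B2 : Set V) : Prop :=
  IsConnectedTwoJoin G X1 X2 A1 B1 A2 B2 ∧
  SideSubstantial G X1 A1 B1 ∧ SideSubstantial G X2 A2 B2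

/-- A degenerate 2-join. -/
def IsDegenerate (G : SimpleGraph V) (X1 X2 A1 B1 A2 B2 : Set V) : Prop :=
  (∃ v ∈ A1, ∀ w ∈ X1 \ A1, ¬ G.Adj v w) ∨
  (∃ v ∈ B1, ∀ w ∈ X1 \ B1, ¬ G.Adj v w) ∨
  (∃ v ∈ A2, ∀ w ∈ X2 \ A2, ¬ G.Adj v w) ∨
  (∃ v ∈ B2, ∀ w ∈ X2 \ B2, ¬ G.Adj v w) ∨
  IsSkewCutset G (A1 ∪ A2) ∨ IsSkewCutset G (B1 ∪ B2) ∨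
  ¬ (SideConnected G X1 A1 B1 ∧ SideConnected G X2 A2 B2) ∨
  (∃ v ∈ A1, ∀ w ∈ B1, G.Adj v w) ∨ (∃ v ∈ B1, ∀ w ∈ A1, G.Adj v w) ∨
  (∃ v ∈ A2, ∀ w ∈ B2, G.Adj v w) ∨ (∃ v ∈ B2, ∀ w ∈ A2, G.Adj v w) ∨
  (∃ v ∈ X1 \ (A1 ∪ B1), ∀ w ∈ A1 ∪ B1, G.Adj v w) ∨
  (∃ v ∈ X2 \ (A2 ∪ B2), ∀ w ∈ A2 ∪ B2, G.Adj v w)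

/-- An induced path from `A` to `B` with no interior vertex in `A ∪ B`. -/
def CrossPath (G : SimpleGraph V) (A B : Set V) {u v : V} (p : G.Walk u v) : Prop :=
  IsInducedPath G p ∧ u ∈ A ∧ v ∈ B ∧ ∀ x, Interior p x → x ∉ A ∪ B

/-- An induced path of length at least 2 with both ends in `S` and no interior vertex in `S`. -/
def OutgoingPath (G : SimpleGraph V) (S : Set V) {u v : V} (p : G.Walk u v) : Prop :=
  IsInducedPath G p ∧ 2 ≤ p.length ∧ u ∈ S ∧ v ∈ S ∧ ∀ x, Interior p x → x ∉ S

def claw : SimpleGraph (Fin 1 ⊕ Fin 3) := completeBipartiteGraph (Fin 1) (Fin 3)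

def diamond : SimpleGraph (Fin 4) := (⊤ : SimpleGraph (Fin 4)).deleteEdges {s(0, 1)}

def ClawFree (G : SimpleGraph V) : Prop := IsEmpty (claw ↪g G)

def DiamondFree (G : SimpleGraph V) : Prop := IsEmpty (diamond ↪g G)

def IsLineGraphOfBipartite {V : Type u} (G : SimpleGraph V) : Prop :=
  ∃ (W : Type u) (H : SimpleGraph W), H.Colorable 2 ∧ Nonempty (G ≃g H.lineGraph)

/-- Double split graph structure. -/
structure IsDoubleSplit (G : SimpleGraph V) (m n : ℕ)
    (a b : Fin m → V) (c d : Fin n → V) : Prop where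
  hm : 2 ≤ m
  hn : 2 ≤ n
  inj : Function.Injective (Sum.elim (Sum.elim a b) (Sum.elim c d))
  cover : Set.range a ∪ Set.range b ∪ Set.range c ∪ Set.range d = Set.univ
  hab : ∀ i, G.Adj (a i) (b i)
  habne : ∀ i i', i ≠ i' →
    ¬ G.Adj (a i) (a i') ∧ ¬ G.Adj (a i) (b i') ∧ ¬ G.Adj (b i) (b i')
  hcd : ∀ j, ¬ G.Adj (c j) (d j)
  hcdall : ∀ j j', j ≠ j' →
    G.Adj (c j) (c j') ∧ G.Adj (c j) (d j') ∧ G.Adj (d j) (d j')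
  cross : ∀ i j,
    (G.Adj (a i) (c j) ∧ G.Adj (b i) (d j) ∧ ¬ G.Adj (a i) (d j) ∧ ¬ G.Adj (b i) (c j)) ∨
    (G.Adj (a i) (d j) ∧ G.Adj (b i) (c j) ∧ ¬ G.Adj (a i) (c j) ∧ ¬ G.Adj (b i) (d j))

/-- Path-double split graph structure. -/
structure IsPathDoubleSplit (G : SimpleGraph V) (m n : ℕ)
    (a b : Fin m → V) (c d : Fin n → V) (E : Set V) : Prop where
  hm : 2 ≤ m
  hn : 2 ≤ n
  inj : Function.Injective (Sum.elim (Sum.elim a b) (Sum.elim c d))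
  notinE : ∀ i, a i ∉ E ∧ b i ∉ E
  notinE' : ∀ j, c j ∉ E ∧ d j ∉ E
  cover : Set.range a ∪ Set.range b ∪ Set.range c ∪ Set.range d ∪ E = Set.univ
  hE : ∀ v ∈ E, (G.neighborSet v).ncard = 2 ∧
    ∃ (i : Fin m) (p : G.Walk (a i) (b i)), IsInducedPath G p ∧ Odd p.length ∧
      (∀ x, Interior p x → x ∈ E) ∧ v ∈ p.support
  hpath : ∀ i, ∃! p : G.Walk (a i) (b i),
    IsInducedPath G p ∧ Odd p.length ∧ (∀ x, Interior p x → x ∈ E)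
  habne : ∀ i i', i ≠ i' →
    ¬ G.Adj (a i) (a i') ∧ ¬ G.Adj (a i) (b i') ∧ ¬ G.Adj (b i) (b i')
  hcd : ∀ j, ¬ G.Adj (c j) (d j)
  hcdall : ∀ j j', j ≠ j' →
    G.Adj (c j) (c j') ∧ G.Adj (c j) (d j') ∧ G.Adj (d j) (d j')
  cross : ∀ i j,
    (G.Adj (a i) (c j) ∧ G.Adj (b i) (d j) ∧ ¬ G.Adj (a i) (d j) ∧ ¬ G.Adj (b i) (c j)) ∨
    (G.Adj (a i) (d j) ∧ G.Adj (b i) (c j) ∧ ¬ G.Adj (a i) (c j) ∧ ¬ G.Adj (b i) (d j))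

/-- Path-cobipartite graph. -/
def IsPathCobipartite (G : SimpleGraph V) : Prop :=
  Berge G ∧ ∃ A B P : Set V,
    Disjoint A B ∧ Disjoint A P ∧ Disjoint B P ∧ A ∪ B ∪ P = Set.univ ∧
    A.Nonempty ∧ B.Nonempty ∧ G.IsClique A ∧ G.IsClique B ∧
    ∀ v ∈ P, (G.neighborSet v).ncard = 2 ∧
      ∃ a ∈ A, ∃ b ∈ B, ∃ p : G.Walk a b, IsInducedPath G p ∧ Odd p.length ∧
        Interior p v ∧ (∀ x, Interior p x → x ∈ P) ∧
        (∀ w, G.Adj a w → w ∈ A ∪ P) ∧ (∀ w, G.Adj b w → w ∈ B ∪ P) ∧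
        (∀ (a' b' : V), a' ∈ A → b' ∈ B → ∀ p' : G.Walk a' b',
          IsInducedPath G p' → Odd p'.length → Interior p' v →
          (∀ x, Interior p' x → x ∈ P) →
          {x | x ∈ p'.support} = {x | x ∈ p.support})

/-- `X` induces a path of `G` with one end in `A`, the other in `B` and interior
outside `A ∪ B`. -/
def PathSideOn (G : SimpleGraph V) (X A B : Set V) : Prop :=
  ∃ a ∈ A, ∃ b ∈ B, ∃ p : G.Walk a b, IsInducedPath G p ∧
    {x | x ∈ p.support} = X ∧ ∀ x, Interior p x → x ∉ A ∪ B

/-- The block of a 2-join: keep the side `X` (with attachments `A`, `B`) and replace the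
other side by a path `p_0, …, p_k`, `p_0` complete to `A` and `p_k` complete to `B`. -/
def blockGraph (G : SimpleGraph V) (X A B : Set V) (k : ℕ) :
    SimpleGraph (↥X ⊕ Fin (k + 1)) where
  Adj x y :=
    match x, y with
    | Sum.inl u, Sum.inl v => G.Adj u v
    | Sum.inl u, Sum.inr i => ((i : ℕ) = 0 ∧ (u : V) ∈ A) ∨ ((i : ℕ) = k ∧ (u : V) ∈ B)
    | Sum.inr i, Sum.inl u => ((i : ℕ) = 0 ∧ (u : V) ∈ A) ∨ ((i : ℕ) = k ∧ (u : V) ∈ B)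
    | Sum.inr i, Sum.inr j => (i : ℕ) + 1 = (j : ℕ) ∨ (j : ℕ) + 1 = (i : ℕ)
  symm := by
    constructor
    rintro (u | i) (v | j) h
    · exact h.symm
    · exact h
    · exact h
    · omega
  loopless := by
    constructor
    rintro (u | i) h
    · exact G.irrefl h
    · omega

/-- The graph `G'` obtained from a Bienstock graph `G` by adding two vertices
(`Sum.inr false` and `Sum.inr true`), each adjacent exactly to `u` and `s`. -/
def bienstockExt (G : SimpleGraph V) (u s : V) : SimpleGraph (V ⊕ Bool) where
  Adj x y :=
    match x, y with
    | Sum.inl p, Sum.inl q => G.Adj p q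
    | Sum.inl p, Sum.inr _ => p = u ∨ p = s
    | Sum.inr _, Sum.inl q => q = u ∨ q = s
    | Sum.inr _, Sum.inr _ => False
  symm := by
    constructor
    rintro (p | i) (q | j) h
    · exact h.symm
    · exact h
    · exact h
    · exact h
  loopless := by
    constructor
    rintro (p | i) h
    · exact G.irrefl h
    · exact h

end BSP

namespace BSP
variable {G : SimpleGraph V}


lemma IsInducedPath.of_cons {u w v : V} {h : G.Adj u w} {q : G.Walk w v}
    (hp : IsInducedPath G (Walk.cons h q)) : IsInducedPath G q := by
  obtain ⟨hpath, hind⟩ := hp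
  refine ⟨hpath.of_cons, fun x hx y hy hadj => ?_⟩
  have hu : u ∉ q.support := by
    have := hpath.support_nodup
    rw [Walk.support_cons, List.nodup_cons] at this
    exact this.1
  have hm := hind x (by simp [hx]) y (by simp [hy]) hadj
  rw [Walk.edges_cons, List.mem_cons] at hm
  rcases hm with he | he
  · exfalso
    rcases Sym2.eq_iff.mp he with ⟨hxu, _⟩ | ⟨_, hyu⟩
    · exact hu (hxu ▸ hx)
    · exact hu (hyu ▸ hy)
  · exact he

lemma IsInducedPath.reverse {u v : V} {p : G.Walk u v} (hp : IsInducedPath G p) :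
    IsInducedPath G p.reverse := by
  refine ⟨hp.1.reverse, fun x hx y hy hadj => ?_⟩
  rw [Walk.support_reverse, List.mem_reverse] at hx hy
  rw [Walk.edges_reverse, List.mem_reverse]
  exact hp.2 x hx y hy hadj

lemma adj_of_length_eq_one {u v : V} {p : G.Walk u v} (h : p.length = 1) : G.Adj u v := by
  cases p with
  | nil => simp at h
  | cons h' q =>
    cases q with
    | nil => exact h'
    | cons h'' q' => simp [Walk.length_cons] at h

/-- For a path, prefix and suffix at a split vertex meet only at that vertex. -/
lemma takeUntil_dropUntil_inter [DecidableEq V] {u v w : V} {p : G.Walk u v}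
    (hp : p.IsPath) (hw : w ∈ p.support) :
    ∀ x, x ∈ (p.takeUntil w hw).support → x ∈ (p.dropUntil w hw).support → x = w := by
  intro x hx1 hx2
  have hnd := hp.support_nodup
  conv at hnd => rw [← Walk.take_spec p hw]
  rw [Walk.support_append, List.nodup_append] at hnd
  by_contra hxw
  have : x ∈ (p.dropUntil w hw).support.tail := by
    rw [Walk.support_eq_cons (p.dropUntil w hw)] at hx2
    rcases List.mem_cons.mp hx2 with h1 | h1
    · exact absurd h1 hxw
    · exact h1
  exact hnd.2.2 x hx1 x this rfl

lemma IsInducedPath.takeUntil [DecidableEq V] {u v w : V} {p : G.Walk u v}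
    (hp : IsInducedPath G p) (hw : w ∈ p.support) :
    IsInducedPath G (p.takeUntil w hw) := by
  refine ⟨hp.1.takeUntil hw, fun x hx y hy hadj => ?_⟩
  have hm := hp.2 x (Walk.support_takeUntil_subset p hw hx) y
    (Walk.support_takeUntil_subset p hw hy) hadj
  conv at hm => rw [← Walk.take_spec p hw]
  rw [Walk.edges_append, List.mem_append] at hm
  rcases hm with he | he
  · exact he
  · exfalso
    have hx2 : x ∈ (p.dropUntil w hw).support := Walk.fst_mem_support_of_mem_edges _ he
    have hy2 : y ∈ (p.dropUntil w hw).support := Walk.snd_mem_support_of_mem_edges _ he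
    have hxw := takeUntil_dropUntil_inter hp.1 hw x hx hx2
    have hyw := takeUntil_dropUntil_inter hp.1 hw y hy hy2
    rw [hxw, hyw] at hadj
    exact G.loopless.irrefl _ hadj

lemma IsInducedPath.dropUntil [DecidableEq V] {u v w : V} {p : G.Walk u v}
    (hp : IsInducedPath G p) (hw : w ∈ p.support) :
    IsInducedPath G (p.dropUntil w hw) := by
  refine ⟨hp.1.dropUntil hw, fun x hx y hy hadj => ?_⟩
  have hm := hp.2 x (Walk.support_dropUntil_subset p hw hx) y
    (Walk.support_dropUntil_subset p hw hy) hadj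
  conv at hm => rw [← Walk.take_spec p hw]
  rw [Walk.edges_append, List.mem_append] at hm
  rcases hm with he | he
  · exfalso
    have hx2 : x ∈ (p.takeUntil w hw).support := Walk.fst_mem_support_of_mem_edges _ he
    have hy2 : y ∈ (p.takeUntil w hw).support := Walk.snd_mem_support_of_mem_edges _ he
    have hxw := takeUntil_dropUntil_inter hp.1 hw x hx2 hx
    have hyw := takeUntil_dropUntil_inter hp.1 hw y hy2 hy
    rw [hxw, hyw] at hadj
    exact G.loopless.irrefl _ hadj
  · exact he


/-- If `s(u,x)` is an edge of a path starting at `u`, then `x` is the second vertex. -/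
lemma edge_start {u v x : V} {p : G.Walk u v} (hp : p.IsPath) (he : s(u, x) ∈ p.edges) :
    ∃ (h : G.Adj u x) (q : G.Walk x v), p = Walk.cons h q := by
  cases p with
  | nil => simp at he
  | cons h q =>
    rename_i w
    have hu : u ∉ q.support := by
      have := hp.support_nodup
      rw [Walk.support_cons, List.nodup_cons] at this
      exact this.1
    rw [Walk.edges_cons, List.mem_cons] at he
    rcases he with he | he
    · rcases Sym2.eq_iff.mp he with ⟨_, hxw⟩ | ⟨huw, _⟩
      · subst hxw; exact ⟨h, q, rfl⟩
      · exact absurd (huw ▸ q.start_mem_support) hu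
    · exact absurd (Walk.fst_mem_support_of_mem_edges q he) hu

/-- Attaching a vertex adjacent exactly to the two ends of an induced path gives a hole;
in a graph with no odd hole, the path must then be even. -/
lemma even_of_attach {u v a : V} {p : G.Walk u v} (hnoh : ¬ HasOddHole G)
    (hp : IsInducedPath G p) (hlen : 2 ≤ p.length)
    (ha : a ∉ p.support) (hau : G.Adj a u) (hva : G.Adj v a)
    (hnb : ∀ x ∈ p.support, G.Adj a x → x = u ∨ x = v) :
    Even p.length := by
  by_contra hodd
  rw [Nat.not_even_iff_odd] at hodd
  apply hnoh
  have huv : u ≠ v := by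
    rintro rfl
    have h0 := Walk.isPath_iff_eq_nil.mp hp.1
    subst h0
    simp at hlen
  set q : G.Walk u a := p.concat hva with hq
  have hqsupp : q.support = p.support ++ [a] := by
    rw [hq, Walk.support_concat]
  have hqedges : q.edges = p.edges ++ [s(v, a)] := by
    rw [hq, Walk.edges_concat, List.concat_eq_append]
  have hqpath : q.IsPath := by
    rw [Walk.isPath_def, hqsupp]
    rw [List.nodup_append]
    exact ⟨hp.1.support_nodup, List.nodup_singleton a,
      fun x hx y hy hxy => by rw [List.mem_singleton] at hy; rw [hy] at hxy; exact ha (hxy ▸ hx)⟩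
  set c : G.Walk a a := Walk.cons hau q with hc
  have hcyc : c.IsCycle := by
    rw [hc, Walk.cons_isCycle_iff]
    refine ⟨hqpath, fun hmem => ?_⟩
    rw [hqedges, List.mem_append] at hmem
    rcases hmem with hmem | hmem
    · exact ha (Walk.fst_mem_support_of_mem_edges p hmem)
    · rw [List.mem_singleton] at hmem
      rcases Sym2.eq_iff.mp hmem with ⟨_, hua⟩ | ⟨_, huv'⟩
      · exact hau.ne hua.symm
      · exact huv huv'
  have hcsupp : ∀ x, x ∈ c.support ↔ (x = a ∨ x ∈ p.support) := by
    intro x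
    rw [hc, Walk.support_cons, List.mem_cons, hqsupp, List.mem_append, List.mem_singleton]
    tauto
  have hcedges : c.edges = s(a, u) :: (p.edges ++ [s(v, a)]) := by
    rw [hc, Walk.edges_cons, hqedges]
  have hmemc : ∀ e ∈ p.edges, e ∈ c.edges := by
    intro e he; rw [hcedges]; simp [he]
  have hind : IsInducedWalk G c := by
    intro x hx y hy hadj
    rw [hcsupp] at hx hy
    rcases hx with rfl | hx
    · rcases hy with rfl | hy
      · exact absurd hadj (G.loopless.irrefl _)
      · rcases hnb y hy hadj with rfl | rfl
        · rw [hcedges]; simp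
        · rw [hcedges]; simp [Sym2.eq_swap]
    · rcases hy with rfl | hy
      · rcases hnb x hx hadj.symm with rfl | rfl
        · rw [hcedges, Sym2.eq_swap]; simp
        · rw [hcedges]; simp
      · exact hmemc _ (hp.2 x hx y hy hadj)
  have hclen : c.length = p.length + 2 := by
    rw [hc, Walk.length_cons, hq, Walk.length_concat]
  obtain ⟨k, hk⟩ := hodd
  refine ⟨a, c, ⟨hcyc, hind⟩, ?_, ?_⟩
  · rw [hclen]; exact ⟨k + 1, by omega⟩
  · rw [hclen]; omega

section TwoJoin
variable {X1 X2 A1 B1 A2 B2 : Set V}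

/-- From an X2-vertex, a walk back to X1 avoiding A2 must pass through B2. -/
lemma exists_B2_mem (hdisj : Disjoint X1 X2) (huniv : X1 ∪ X2 = Set.univ)
    (hjoin : ∀ x ∈ X1, ∀ y ∈ X2, G.Adj x y → (x ∈ A1 ∧ y ∈ A2) ∨ (x ∈ B1 ∧ y ∈ B2)) :
    ∀ {t v' : V} (r : G.Walk t v'), t ∈ X2 → v' ∈ X1 → (∀ x ∈ r.support, x ∉ A2) →
      ∃ t', t' ∈ r.support ∧ t' ∈ B2 := by
  have hmemX1 : ∀ x : V, x ∉ X2 → x ∈ X1 := by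
    intro x hx
    have hx2 : x ∈ X1 ∪ X2 := by rw [huniv]; exact Set.mem_univ x
    rcases hx2 with h | h
    · exact h
    · exact absurd h hx
  intro t v' r
  induction r with
  | nil =>
    intro ht hv _
    exact absurd ht (Set.disjoint_left.mp hdisj hv)
  | @cons a b c h q ih =>
    intro ht hv hA2
    by_cases hb : b ∈ X2
    · obtain ⟨t', ht', hB⟩ := ih hb hv
        (fun x hx => hA2 x (by rw [Walk.support_cons]; exact List.mem_cons_of_mem _ hx))
      exact ⟨t', by rw [Walk.support_cons]; exact List.mem_cons_of_mem _ ht', hB⟩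
    · rcases hjoin b (hmemX1 b hb) a ht h.symm with ⟨_, htA2⟩ | ⟨_, htB2⟩
      · exact absurd htA2 (hA2 a (Walk.start_mem_support _))
      · exact ⟨a, Walk.start_mem_support _, htB2⟩

/-- On an induced path between X1-vertices avoiding A2, there is at most one X2-vertex. -/
lemma uniqueX2 [DecidableEq V] (hdisj : Disjoint X1 X2) (huniv : X1 ∪ X2 = Set.univ)
    (hBB : ∀ b1 ∈ B1, ∀ b2 ∈ B2, G.Adj b1 b2)
    (hjoin : ∀ x ∈ X1, ∀ y ∈ X2, G.Adj x y → (x ∈ A1 ∧ y ∈ A2) ∨ (x ∈ B1 ∧ y ∈ B2)) :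
    ∀ {u v : V} (p : G.Walk u v), IsInducedPath G p → u ∈ X1 → v ∈ X1 →
      (∀ x ∈ p.support, x ∉ A2) →
      ∀ t1 ∈ p.support, ∀ t2 ∈ p.support, t1 ∈ X2 → t2 ∈ X2 → t1 = t2 := by
  have hmemX1 : ∀ x : V, x ∉ X2 → x ∈ X1 := by
    intro x hx
    have hx2 : x ∈ X1 ∪ X2 := by rw [huniv]; exact Set.mem_univ x
    rcases hx2 with h | h
    · exact h
    · exact absurd h hx
  intro u v p
  induction p with
  | nil =>
    intro _ hu _ _ t1 ht1 _ _ ht1X _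
    rw [Walk.support_nil, List.mem_singleton] at ht1
    exact absurd (ht1 ▸ ht1X) (Set.disjoint_left.mp hdisj hu)
  | @cons u w v h q ih =>
    intro hind huX1 hvX1 hA2 t1 ht1 t2 ht2 ht1X ht2X
    have hqind : IsInducedPath G q := hind.of_cons
    have hA2q : ∀ x ∈ q.support, x ∉ A2 := fun x hx =>
      hA2 x (by rw [Walk.support_cons]; exact List.mem_cons_of_mem _ hx)
    have hmemq : ∀ t, t ∈ (Walk.cons h q).support → t ∈ X2 → t ∈ q.support := by
      intro t ht htX
      rw [Walk.support_cons, List.mem_cons] at ht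
      rcases ht with rfl | ht
      · exact absurd htX (Set.disjoint_left.mp hdisj huX1)
      · exact ht
    by_cases hwX : w ∈ X2
    · -- u ∈ B1, and w is the unique X2 vertex
      have hwsup : w ∈ (Walk.cons h q).support := by
        rw [Walk.support_cons]
        exact List.mem_cons_of_mem _ q.start_mem_support
      have huB1 : u ∈ B1 := by
        rcases hjoin u huX1 w hwX h with ⟨_, hwA2⟩ | ⟨hB, _⟩
        · exact absurd hwA2 (hA2 w hwsup)
        · exact hB
      have hkey : ∀ t ∈ (Walk.cons h q).support, t ∈ X2 → t = w := by
        intro t ht htX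
        have htq : t ∈ q.support := hmemq t ht htX
        by_contra htw
        obtain ⟨t', ht'r, ht'B2⟩ := exists_B2_mem hdisj huniv hjoin
          (q.dropUntil t htq) htX hvX1
          (fun x hx => hA2q x (Walk.support_dropUntil_subset q htq hx))
        have ht'q : t' ∈ q.support := Walk.support_dropUntil_subset q htq ht'r
        have ht'w : t' ≠ w := by
          rintro rfl
          exact htw (takeUntil_dropUntil_inter hqind.1 htq t'
            (q.takeUntil t htq).start_mem_support ht'r).symm
        have hadj : G.Adj u t' := hBB u huB1 t' ht'B2
        have hedge := hind.2 u (Walk.start_mem_support _) t'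
          (by rw [Walk.support_cons]; exact List.mem_cons_of_mem _ ht'q) hadj
        rw [Walk.edges_cons, List.mem_cons] at hedge
        rcases hedge with he | he
        · rcases Sym2.eq_iff.mp he with ⟨_, h2⟩ | ⟨h1, _⟩
          · exact ht'w h2
          · exact Set.disjoint_left.mp hdisj (h1 ▸ huX1) hwX
        · have huq : u ∈ q.support := Walk.fst_mem_support_of_mem_edges q he
          have hnd := hind.1.support_nodup
          rw [Walk.support_cons, List.nodup_cons] at hnd
          exact hnd.1 huq
      rw [hkey t1 ht1 ht1X, hkey t2 ht2 ht2X]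
    · exact ih hqind (hmemX1 w hwX) hvX1 hA2q t1 (hmemq t1 ht1 ht1X) t2 (hmemq t2 ht2 ht2X)
        ht1X ht2X

end TwoJoin

section Main
variable {X1 X2 A1 B1 A2 B2 : Set V}

lemma outgoing_A1_even (hnoh : ¬ HasOddHole G)
    (hJ : IsTwoJoinSplit G X1 X2 A1 B1 A2 B2) :
    ∀ (u v : V) (p : G.Walk u v), OutgoingPath G A1 p → Even p.length := by
  classical
  obtain ⟨hdisj, huniv, hA1X, hB1X, hA2X, hB2X, hdAB1, hdAB2, hA1ne, hB1ne, hA2ne, hB2ne,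
    hAA, hBB, hjoin⟩ := hJ
  have hmemX2 : ∀ x : V, x ∉ X1 → x ∈ X2 := by
    intro x hx
    have hx2 : x ∈ X1 ∪ X2 := by rw [huniv]; exact Set.mem_univ x
    rcases hx2 with h | h
    · exact absurd h hx
    · exact h
  intro u v p hop
  obtain ⟨hind, hlen2, hu, hv, hints⟩ := hop
  obtain ⟨a2, ha2⟩ := hA2ne
  by_contra hodd
  rw [Nat.not_even_iff_odd] at hodd
  have hlen3 : 3 ≤ p.length := by obtain ⟨k, hk⟩ := hodd; omega
  have huX1 : u ∈ X1 := hA1X hu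
  have hvX1 : v ∈ X1 := hA1X hv
  have huv : u ≠ v := by
    rintro rfl
    have h0 := Walk.isPath_iff_eq_nil.mp hind.1
    subst h0
    simp at hlen2
  have claimA1 : ∀ x ∈ p.support, x ∈ A1 → x = u ∨ x = v := by
    intro x hx hA
    by_contra hco
    push_neg at hco
    exact hints x ⟨hx, hco.1, hco.2⟩ hA
  have claim2 : ∀ x ∈ p.support, x ∉ A2 := by
    intro x hx hxA2
    have hxu : x ≠ u := by
      rintro rfl
      exact Set.disjoint_left.mp hdisj huX1 (hA2X hxA2)
    have he1 : s(u, x) ∈ p.edges := hind.2 u p.start_mem_support x hx (hAA u hu x hxA2)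
    obtain ⟨h1, q, rfl⟩ := edge_start hind.1 he1
    have he2 : s(x, v) ∈ (Walk.cons h1 q).edges :=
      hind.2 x (by rw [Walk.support_cons]; exact List.mem_cons_of_mem _ q.start_mem_support)
        v (Walk.end_mem_support _) (hAA v hv x hxA2).symm
    rw [Walk.edges_cons, List.mem_cons] at he2
    rcases he2 with he | he
    · rcases Sym2.eq_iff.mp he with ⟨hxu', _⟩ | ⟨_, hvu⟩
      · exact hxu hxu'
      · exact huv hvu.symm
    · obtain ⟨h2, q', rfl⟩ := edge_start hind.1.of_cons he
      have h0 := Walk.isPath_iff_eq_nil.mp hind.1.of_cons.of_cons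
      subst h0
      simp [Walk.length_cons] at hlen3
  have ha2nsup : a2 ∉ p.support := fun hs => claim2 a2 hs ha2
  by_cases hw : ∃ w, w ∈ p.support ∧ w ∈ X2 ∧ G.Adj a2 w
  · obtain ⟨w, hwsup, hwX2, haw⟩ := hw
    have hW : ∀ t ∈ p.support, t ∈ X2 → t = w := fun t ht htX =>
      uniqueX2 hdisj huniv hBB hjoin p hind huX1 hvX1 claim2 t ht w hwsup htX hwX2
    have hqind : IsInducedPath G (p.takeUntil w hwsup) := hind.takeUntil hwsup
    have hrind : IsInducedPath G (p.dropUntil w hwsup) := hind.dropUntil hwsup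
    have hlen_split : (p.takeUntil w hwsup).length + (p.dropUntil w hwsup).length = p.length := by
      rw [← Walk.length_append, Walk.take_spec]
    have hvq : v ∉ (p.takeUntil w hwsup).support := by
      intro hvq
      have hvw := takeUntil_dropUntil_inter hind.1 hwsup v hvq (Walk.end_mem_support _)
      exact Set.disjoint_left.mp hdisj hvX1 (by rw [hvw]; exact hwX2)
    have hur : u ∉ (p.dropUntil w hwsup).support := by
      intro hur
      have huw := takeUntil_dropUntil_inter hind.1 hwsup u (Walk.start_mem_support _) hur
      exact Set.disjoint_left.mp hdisj huX1 (by rw [huw]; exact hwX2)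
    have hnbr : ∀ x ∈ p.support, G.Adj a2 x → x = u ∨ x = v ∨ x = w := by
      intro x hx hadj
      by_cases hxX : x ∈ X1
      · rcases hjoin x hxX a2 (hA2X ha2) hadj.symm with ⟨hxA1, _⟩ | ⟨_, hB2⟩
        · rcases claimA1 x hx hxA1 with h | h
          · exact Or.inl h
          · exact Or.inr (Or.inl h)
        · exact absurd hB2 (Set.disjoint_left.mp hdAB2 ha2)
      · exact Or.inr (Or.inr (hW x hx (hmemX2 x hxX)))
    have hqlen0 : (p.takeUntil w hwsup).length ≠ 0 := by
      intro h0
      have huw := Walk.eq_of_length_eq_zero h0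
      exact Set.disjoint_left.mp hdisj huX1 (by rw [huw]; exact hwX2)
    have hqlen1 : (p.takeUntil w hwsup).length ≠ 1 := by
      intro h1
      have hadj := adj_of_length_eq_one h1
      rcases hjoin u huX1 w hwX2 hadj with ⟨_, hwA2⟩ | ⟨hB, _⟩
      · exact claim2 w hwsup hwA2
      · exact Set.disjoint_left.mp hdAB1 hu hB
    have hrlen0 : (p.dropUntil w hwsup).length ≠ 0 := by
      intro h0
      have hwv := Walk.eq_of_length_eq_zero h0
      exact Set.disjoint_left.mp hdisj hvX1 (by rw [← hwv]; exact hwX2)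
    have hrlen1 : (p.dropUntil w hwsup).length ≠ 1 := by
      intro h1
      have hadj := adj_of_length_eq_one h1
      rcases hjoin v hvX1 w hwX2 hadj.symm with ⟨_, hwA2⟩ | ⟨hB, _⟩
      · exact claim2 w hwsup hwA2
      · exact Set.disjoint_left.mp hdAB1 hv hB
    have hEvenq : Even (p.takeUntil w hwsup).length := by
      refine even_of_attach hnoh hqind (by omega)
        (fun hs => ha2nsup (Walk.support_takeUntil_subset p hwsup hs))
        (hAA u hu a2 ha2).symm haw.symm ?_
      intro x hx hadj
      rcases hnbr x (Walk.support_takeUntil_subset p hwsup hx) hadj with rfl | rfl | rfl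
      · exact Or.inl rfl
      · exact absurd hx hvq
      · exact Or.inr rfl
    have hEvenr : Even (p.dropUntil w hwsup).length := by
      have hrev := even_of_attach (p := (p.dropUntil w hwsup).reverse) hnoh hrind.reverse
        (by rw [Walk.length_reverse]; omega)
        (by
          intro hs
          rw [Walk.support_reverse, List.mem_reverse] at hs
          exact ha2nsup (Walk.support_dropUntil_subset p hwsup hs))
        (hAA v hv a2 ha2).symm haw.symm
        (by
          intro x hx hadj
          rw [Walk.support_reverse, List.mem_reverse] at hx
          rcases hnbr x (Walk.support_dropUntil_subset p hwsup hx) hadj with rfl | rfl | rfl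
          · exact absurd hx hur
          · exact Or.inl rfl
          · exact Or.inr rfl)
      rwa [Walk.length_reverse] at hrev
    obtain ⟨m, hm⟩ := hEvenq
    obtain ⟨n, hn⟩ := hEvenr
    obtain ⟨k, hk⟩ := hodd
    omega
  · push_neg at hw
    have hEven : Even p.length := by
      refine even_of_attach hnoh hind hlen2 ha2nsup (hAA u hu a2 ha2).symm
        (hAA v hv a2 ha2) ?_
      intro x hx hadj
      by_cases hxX : x ∈ X1
      · rcases hjoin x hxX a2 (hA2X ha2) hadj.symm with ⟨hxA1, _⟩ | ⟨_, hB2⟩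
        · exact claimA1 x hx hxA1
        · exact absurd hB2 (Set.disjoint_left.mp hdAB2 ha2)
      · exact absurd hadj (hw x hx (hmemX2 x hxX))
    exact (Nat.not_even_iff_odd.mpr hodd) hEven

end Main

lemma IsTwoJoinSplit.swapAB {X1 X2 A1 B1 A2 B2 : Set V}
    (hJ : IsTwoJoinSplit G X1 X2 A1 B1 A2 B2) :
    IsTwoJoinSplit G X1 X2 B1 A1 B2 A2 := by
  obtain ⟨h1, h2, h3, h4, h5, h6, h7, h8, h9, h10, h11, h12, h13, h14, h15⟩ := hJ
  exact ⟨h1, h2, h4, h3, h6, h5, h7.symm, h8.symm, h10, h9, h12, h11, h14, h13,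
    fun x hx y hy hadj => (h15 x hx y hy hadj).symm⟩

lemma IsTwoJoinSplit.swapSides {X1 X2 A1 B1 A2 B2 : Set V}
    (hJ : IsTwoJoinSplit G X1 X2 A1 B1 A2 B2) :
    IsTwoJoinSplit G X2 X1 A2 B2 A1 B1 := by
  obtain ⟨h1, h2, h3, h4, h5, h6, h7, h8, h9, h10, h11, h12, h13, h14, h15⟩ := hJ
  refine ⟨h1.symm, by rw [Set.union_comm]; exact h2, h5, h6, h3, h4, h8, h7, h11, h12, h9, h10,
    fun a2 ha2 a1 ha1 => (h13 a1 ha1 a2 ha2).symm,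
    fun b2 hb2 b1 hb1 => (h14 b1 hb1 b2 hb2).symm, ?_⟩
  intro x hx y hy hadj
  rcases h15 y hy x hx hadj.symm with ⟨hy', hx'⟩ | ⟨hy', hx'⟩
  · exact Or.inl ⟨hx', hy'⟩
  · exact Or.inr ⟨hx', hy'⟩

end BSP

/-- In a Berge graph with a 2-join, every outgoing path from `A_i` to `A_i`
(resp. `B_i` to `B_i`) has even length. -/
theorem two_join_outgoing_path_even {V : Type*} (G : SimpleGraph V)
    (X1 X2 A1 B1 A2 B2 : Set V)
    (hBerge : BSP.Berge G)
    (hJ : BSP.IsTwoJoinSplit G X1 X2 A1 B1 A2 B2) :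
    ∀ S : Set V, (S = A1 ∨ S = B1 ∨ S = A2 ∨ S = B2) →
      ∀ (u v : V) (p : G.Walk u v), BSP.OutgoingPath G S p → Even p.length := by
  rintro S (rfl | rfl | rfl | rfl) u v p hp
  · exact BSP.outgoing_A1_even hBerge.1 hJ u v p hp
  · exact BSP.outgoing_A1_even hBerge.1 hJ.swapAB u v p hp
  · exact BSP.outgoing_A1_even hBerge.1 hJ.swapSides u v p hp
  · exact BSP.outgoing_A1_even hBerge.1 hJ.swapSides.swapAB u v p hp
end

section
/- Let G be a Berge graph with a 2-join (X1,X2) with split (X1,X2,A1,B1,A2,B2), and let i ∈ {1,2}. Then every induced antipath of length at least 2 whose interior vertices all lie in A_i and whose two ends lie outside A_i has even length; similarly with B_i in place of A_i. -/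
open SimpleGraph

universe u

section Helpers

open SimpleGraph Walk

variable {V : Type*}

lemma BSP.induced_reverse {G : SimpleGraph V} {u v : V} {q : G.Walk u v}
    (h : BSP.IsInducedPath G q) : BSP.IsInducedPath G q.reverse := by
  refine ⟨h.1.reverse, ?_⟩
  intro x hx y hy hadj
  rw [Walk.support_reverse, List.mem_reverse] at hx hy
  rw [Walk.edges_reverse, List.mem_reverse]
  exact h.2 x hx y hy hadj

lemma BSP.interior_reverse {G : SimpleGraph V} {u v x : V} {q : G.Walk u v}
    (h : BSP.Interior q.reverse x) : BSP.Interior q x := by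
  obtain ⟨hs, h1, h2⟩ := h
  rw [Walk.support_reverse, List.mem_reverse] at hs
  exact ⟨hs, h2, h1⟩

lemma BSP.head_facts {G : SimpleGraph V} {u v : V} (q : G.Walk u v)
    (hq : BSP.IsInducedPath G q) (h3 : 3 ≤ q.length) :
    u ≠ v ∧ ∃ b c : V, BSP.Interior q b ∧ BSP.Interior q c ∧ G.Adj u b ∧
      ¬ G.Adj u c ∧ u ≠ c := by
  cases q with
  | nil => simp at h3
  | cons h1 p =>
    rename_i b
    cases p with
    | nil => simp at h3
    | cons h2 p2 =>
      rename_i c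
      cases p2 with
      | nil => simp at h3
      | cons h3' p3 =>
        rename_i d
        obtain ⟨hpath, hind⟩ := hq
        rw [Walk.cons_isPath_iff] at hpath
        obtain ⟨hpath, hu⟩ := hpath
        rw [Walk.cons_isPath_iff] at hpath
        obtain ⟨hpath, hb⟩ := hpath
        rw [Walk.cons_isPath_iff] at hpath
        obtain ⟨hpath, hc⟩ := hpath
        simp only [Walk.support_cons, List.mem_cons] at hu hb
        push_neg at hu hb
        obtain ⟨hub2, huc, hup3⟩ := hu
        obtain ⟨hbc, hbp3⟩ := hb
        have hvp3 : v ∈ p3.support := p3.end_mem_support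
        have hbv : b ≠ v := by rintro rfl; exact hbp3 hvp3
        have hcv : c ≠ v := by rintro rfl; exact hc hvp3
        have huv : u ≠ v := by rintro rfl; exact hup3 hvp3
        refine ⟨huv, b, c, ⟨by simp, hub2.symm, hbv⟩, ⟨by simp, huc.symm, hcv⟩, h1, ?_, huc⟩
        intro hadj
        have := hind u (by simp) c (by simp) hadj
        simp only [Walk.edges_cons, List.mem_cons] at this
        rcases this with h' | h' | h' | h'
        · rw [Sym2.eq_iff] at h'
          rcases h' with ⟨-, h'⟩ | ⟨h', -⟩
          · exact hbc h'.symm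
          · exact hub2 h'
        · rw [Sym2.eq_iff] at h'
          rcases h' with ⟨h', -⟩ | ⟨-, h''⟩
          · exact hub2 h'
          · exact hbc h''.symm
        · rw [Sym2.eq_iff] at h'
          rcases h' with ⟨h', -⟩ | ⟨h', -⟩
          · exact huc h'
          · exact hup3 (h' ▸ p3.start_mem_support)
        · exact hup3 (Walk.fst_mem_support_of_mem_edges p3 h')

lemma BSP.key {G : SimpleGraph V} (S T : Set V)
    (hST : Disjoint S T) (hT : T.Nonempty)
    (hcomp : ∀ s ∈ S, ∀ t ∈ T, G.Adj s t)
    (hsep : ∀ x, x ∉ S → (∃ s ∈ S, G.Adj x s) → (∃ s' ∈ S, ¬ G.Adj x s' ∧ x ≠ s') →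
      ∀ t ∈ T, ¬ G.Adj x t ∧ x ≠ t)
    (hB : ¬ BSP.HasOddHole Gᶜ) :
    ∀ (u v : V) (q : (Gᶜ).Walk u v), BSP.IsInducedPath Gᶜ q → 2 ≤ q.length →
      u ∉ S → v ∉ S → (∀ x, BSP.Interior q x → x ∈ S) → Even q.length := by
  intro u v q hq h2 hu hv hint
  by_contra hodd
  have hoddl : Odd q.length := Nat.not_even_iff_odd.mp hodd
  have h3 : 3 ≤ q.length := by
    obtain ⟨m, hm⟩ := hoddl; omega
  obtain ⟨huv, b, c, hbI, hcI, hub, hnuc, hucne⟩ := BSP.head_facts q hq h3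
  obtain ⟨-, b', c', hbI', hcI', hvb, hnvc, hvcne⟩ :=
    BSP.head_facts q.reverse (BSP.induced_reverse hq) (by simpa using h3)
  have hbI' := BSP.interior_reverse hbI'
  have hcI' := BSP.interior_reverse hcI'
  -- translate complement adjacency facts to G
  have hGuc : G.Adj u c := by
    by_contra h; exact hnuc ((G.compl_adj u c).mpr ⟨hucne, h⟩)
  have hGvc : G.Adj v c' := by
    by_contra h; exact hnvc ((G.compl_adj v c').mpr ⟨hvcne, h⟩)
  have hGub : ¬ G.Adj u b ∧ u ≠ b := ⟨((G.compl_adj u b).mp hub).2, ((G.compl_adj u b).mp hub).1⟩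
  have hGvb : ¬ G.Adj v b' ∧ v ≠ b' := ⟨((G.compl_adj v b').mp hvb).2, ((G.compl_adj v b').mp hvb).1⟩
  obtain ⟨t, htT⟩ := hT
  have husep := hsep u hu ⟨c, hint c hcI, hGuc⟩ ⟨b, hint b hbI, hGub.1, hGub.2⟩ t htT
  have hvsep := hsep v hv ⟨c', hint c' hcI', hGvc⟩ ⟨b', hint b' hbI', hGvb.1, hGvb.2⟩ t htT
  have hut : (Gᶜ).Adj u t := (G.compl_adj u t).mpr ⟨husep.2, husep.1⟩
  have hvt : (Gᶜ).Adj v t := (G.compl_adj v t).mpr ⟨hvsep.2, hvsep.1⟩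
  have htS : t ∉ S := fun h => Set.disjoint_left.mp hST h htT
  have htsup : t ∉ q.support := by
    intro h
    by_cases h1 : t = u
    · exact hut.ne h1.symm
    by_cases h2' : t = v
    · exact hvt.ne h2'.symm
    · exact htS (hint t ⟨h, h1, h2'⟩)
  -- build the odd antihole
  have hwu : (Gᶜ).Adj t u := hut.symm
  refine hB ⟨t, Walk.cons hwu (q.concat hvt), ⟨?_, ?_⟩, ?_, ?_⟩
  · rw [Walk.cons_isCycle_iff]
    constructor
    · rw [← Walk.isPath_reverse_iff, Walk.reverse_concat, Walk.cons_isPath_iff]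
      refine ⟨hq.1.reverse, ?_⟩
      rw [Walk.support_reverse, List.mem_reverse]
      exact htsup
    · rw [Walk.edges_concat]
      simp only [List.concat_eq_append, List.mem_append, List.mem_singleton]
      rintro (h' | h')
      · exact htsup (Walk.fst_mem_support_of_mem_edges q h')
      · rw [Sym2.eq_iff] at h'
        rcases h' with ⟨h', -⟩ | ⟨-, h'⟩
        · exact hvt.ne h'.symm
        · exact huv h'
  · -- induced
    intro x hx y hy hadj
    simp only [Walk.support_cons, Walk.support_concat, List.concat_eq_append, List.mem_cons,
      List.mem_append, List.mem_singleton] at hx hy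
    have hedges : ∀ z w : V, z ∈ q.support → w ∈ q.support → (Gᶜ).Adj z w →
        s(z, w) ∈ (Walk.cons hwu (q.concat hvt)).edges := by
      intro z w hz hw hzw
      have := hq.2 z hz w hw hzw
      simp [Walk.edges_cons, Walk.edges_concat, List.concat_eq_append, this]
    have hwall : ∀ w : V, w ∈ q.support → (Gᶜ).Adj t w →
        s(t, w) ∈ (Walk.cons hwu (q.concat hvt)).edges := by
      intro w hw htw
      by_cases h1 : w = u
      · subst h1; simp [Walk.edges_cons]
      by_cases h2' : w = v
      · subst h2'
        simp only [Walk.edges_cons, Walk.edges_concat, List.concat_eq_append, List.mem_cons,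
          List.mem_append, List.mem_singleton]
        right; right; left
        exact Sym2.eq_swap
      · exfalso
        have hwS : w ∈ S := hint w ⟨hw, h1, h2'⟩
        exact ((G.compl_adj t w).mp htw).2 (hcomp w hwS t htT).symm
    have hx' : x = t ∨ x ∈ q.support := by tauto
    have hy' : y = t ∨ y ∈ q.support := by tauto
    rcases hx' with rfl | hx'
    · rcases hy' with rfl | hy'
      · exact absurd rfl hadj.ne
      · exact hwall y hy' hadj
    · rcases hy' with rfl | hy'
      · have := hwall x hx' hadj.symm
        rw [Sym2.eq_swap] at this; exact this
      · exact hedges x y hx' hy' hadj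
  · simp only [Walk.length_cons, Walk.length_concat]
    obtain ⟨m, hm⟩ := hoddl
    exact ⟨m + 1, by omega⟩
  · simp only [Walk.length_cons, Walk.length_concat]
    omega

lemma BSP.sep_of_join {G : SimpleGraph V} {X1 X2 S T S' T' : Set V}
    (hX : Disjoint X1 X2)
    (hcov : X1 ∪ X2 = Set.univ)
    (hS : S ⊆ X1) (hT : T ⊆ X2) (_hS' : S' ⊆ X1) (_hT' : T' ⊆ X2)
    (hSS' : Disjoint S S') (hTT' : Disjoint T T')
    (hcomp : ∀ s ∈ S, ∀ t ∈ T, G.Adj s t)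
    (hedge : ∀ x ∈ X1, ∀ y ∈ X2, G.Adj x y → (x ∈ S ∧ y ∈ T) ∨ (x ∈ S' ∧ y ∈ T')) :
    ∀ x, x ∉ S → (∃ s ∈ S, G.Adj x s) → (∃ s' ∈ S, ¬ G.Adj x s' ∧ x ≠ s') →
      ∀ t ∈ T, ¬ G.Adj x t ∧ x ≠ t := by
  intro x hxS ⟨s, hs, hadj⟩ ⟨s', hs', hnadj, _⟩ t ht
  have hx12 : x ∈ X1 ∨ x ∈ X2 := by
    have : x ∈ X1 ∪ X2 := hcov ▸ Set.mem_univ x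
    exact this
  have hx1 : x ∈ X1 := by
    rcases hx12 with h | h
    · exact h
    exfalso
    rcases hedge s (hS hs) x h hadj.symm with ⟨-, hxT⟩ | ⟨hsS', -⟩
    · exact hnadj (hcomp s' hs' x hxT).symm
    · exact Set.disjoint_left.mp hSS' hs hsS'
  constructor
  · intro h
    rcases hedge x hx1 t (hT ht) h with ⟨hxS', -⟩ | ⟨-, htT'⟩
    · exact hxS hxS'
    · exact Set.disjoint_left.mp hTT' ht htT'
  · rintro rfl
    exact Set.disjoint_left.mp hX hx1 (hT ht)

end Helpers


/-- In a Berge graph with a 2-join, every antipath of length at least 2 whose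
interior lies in `A_i` (resp. `B_i`) and whose ends lie outside has even length. -/
theorem two_join_antipath_even {V : Type*} (G : SimpleGraph V)
    (X1 X2 A1 B1 A2 B2 : Set V)
    (hBerge : BSP.Berge G)
    (hJ : BSP.IsTwoJoinSplit G X1 X2 A1 B1 A2 B2) :
    ∀ S : Set V, (S = A1 ∨ S = B1 ∨ S = A2 ∨ S = B2) →
      ∀ (u v : V) (q : (Gᶜ).Walk u v), BSP.IsInducedPath Gᶜ q → 2 ≤ q.length →
        u ∉ S → v ∉ S → (∀ x, BSP.Interior q x → x ∈ S) → Even q.length := by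
  intro S hS u v q hq h2 hu hv hint
  obtain ⟨hX12, hcov, hA1, hB1, hA2, hB2, hA1B1, hA2B2, hA1ne, hB1ne, hA2ne, hB2ne,
    hAcomp, hBcomp, hedge⟩ := hJ
  have hB : ¬ BSP.HasOddHole Gᶜ := hBerge.2
  have hedge2 : ∀ x ∈ X2, ∀ y ∈ X1, G.Adj x y → (x ∈ A2 ∧ y ∈ A1) ∨ (x ∈ B2 ∧ y ∈ B1) := by
    intro x hx y hy h
    rcases hedge y hy x hx h.symm with ⟨h1, h2⟩ | ⟨h1, h2⟩
    · exact Or.inl ⟨h2, h1⟩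
    · exact Or.inr ⟨h2, h1⟩
  have hcov2 : X2 ∪ X1 = Set.univ := by rw [Set.union_comm]; exact hcov
  rcases hS with rfl | rfl | rfl | rfl
  · exact BSP.key S A2 (hX12.mono hA1 hA2) hA2ne hAcomp
      (BSP.sep_of_join hX12 hcov hA1 hA2 hB1 hB2 hA1B1 hA2B2 hAcomp hedge)
      hB u v q hq h2 hu hv hint
  · exact BSP.key S B2 (hX12.mono hB1 hB2) hB2ne hBcomp
      (BSP.sep_of_join hX12 hcov hB1 hB2 hA1 hA2 hA1B1.symm hA2B2.symm hBcomp
        (fun x hx y hy h => (hedge x hx y hy h).symm))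
      hB u v q hq h2 hu hv hint
  · exact BSP.key S A1 ((hX12.mono hA1 hA2).symm) hA1ne
      (fun s hs t ht => (hAcomp t ht s hs).symm)
      (BSP.sep_of_join hX12.symm hcov2 hA2 hA1 hB2 hB1 hA2B2 hA1B1
        (fun s hs t ht => (hAcomp t ht s hs).symm) hedge2)
      hB u v q hq h2 hu hv hint
  · exact BSP.key S B1 ((hX12.mono hB1 hB2).symm) hB1ne
      (fun s hs t ht => (hBcomp t ht s hs).symm)
      (BSP.sep_of_join hX12.symm hcov2 hB2 hB1 hA2 hA1 hA2B2.symm hA1B1.symm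
        (fun s hs t ht => (hBcomp t ht s hs).symm)
        (fun x hx y hy h => (hedge2 x hx y hy h).symm))
      hB u v q hq h2 hu hv hint
end

section
/- Let G be a graph with a 2-join (X1,X2) with split (X1,X2,A1,B1,A2,B2), and let Q be an induced antipath of G of length at least 4 all of whose interior vertices lie in X2. Then there exists a vertex a ∈ A1 ∪ B1 such that V(Q) ⊆ X2 ∪ {a}. -/
open SimpleGraph

universe u

namespace BSP

lemma getVert_mem_support' {V : Type*} {G : SimpleGraph V} {u v : V} (p : G.Walk u v) (i : ℕ) :
    p.getVert i ∈ p.support := by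
  rcases le_or_gt i p.length with h | h
  · exact SimpleGraph.Walk.mem_support_iff_exists_getVert.mpr ⟨i, rfl, h⟩
  · rw [p.getVert_of_length_le h.le]; exact p.end_mem_support

lemma getVert_injOn' {V : Type*} {G : SimpleGraph V} {u v : V} {p : G.Walk u v}
    (hp : p.IsPath) : ∀ i, i ≤ p.length → ∀ j, j ≤ p.length →
      p.getVert i = p.getVert j → i = j := by
  induction p with
  | nil => intro i hi j hj _; simp only [SimpleGraph.Walk.length_nil] at hi hj; omega
  | cons h p ih =>
    intro i hi j hj heq
    rw [SimpleGraph.Walk.cons_isPath_iff] at hp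
    match i, j with
    | 0, 0 => rfl
    | 0, j+1 =>
      exfalso
      apply hp.2
      have : p.getVert j ∈ p.support := getVert_mem_support' p j
      rw [show (SimpleGraph.Walk.cons h p).getVert 0 = _ from SimpleGraph.Walk.getVert_zero _,
        SimpleGraph.Walk.getVert_cons_succ] at heq
      rwa [← heq] at this
    | i+1, 0 =>
      exfalso
      apply hp.2
      have : p.getVert i ∈ p.support := getVert_mem_support' p i
      rw [show (SimpleGraph.Walk.cons h p).getVert 0 = _ from SimpleGraph.Walk.getVert_zero _,
        SimpleGraph.Walk.getVert_cons_succ] at heq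
      rwa [heq] at this
    | i+1, j+1 =>
      rw [SimpleGraph.Walk.length_cons] at hi hj
      rw [SimpleGraph.Walk.getVert_cons_succ, SimpleGraph.Walk.getVert_cons_succ] at heq
      have := ih hp.1 i (by omega) j (by omega) heq
      omega

lemma edges_exists_index' {V : Type*} {G : SimpleGraph V} {u v : V} (p : G.Walk u v)
    {e : Sym2 V} (he : e ∈ p.edges) :
    ∃ i, i < p.length ∧ e = s(p.getVert i, p.getVert (i+1)) := by
  induction p with
  | nil => simp at he
  | cons h p ih =>
    rw [SimpleGraph.Walk.edges_cons, List.mem_cons] at he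
    rcases he with rfl | he
    · refine ⟨0, by simp [SimpleGraph.Walk.length_cons], ?_⟩
      rw [SimpleGraph.Walk.getVert_zero]
      have : (SimpleGraph.Walk.cons h p).getVert 1 = p.getVert 0 :=
        SimpleGraph.Walk.getVert_cons_succ _ _
      rw [this, SimpleGraph.Walk.getVert_zero]
    · obtain ⟨i, hi, hei⟩ := ih he
      refine ⟨i + 1, by rw [SimpleGraph.Walk.length_cons]; omega, ?_⟩
      rw [SimpleGraph.Walk.getVert_cons_succ, SimpleGraph.Walk.getVert_cons_succ]
      exact hei

/-- In an induced path of `Gᶜ`, vertices at distance at least 2 along the path are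
`G`-adjacent. -/
lemma antipath_far_adj {V : Type*} {G : SimpleGraph V} {u v : V} {q : (Gᶜ).Walk u v}
    (hq : BSP.IsInducedPath Gᶜ q) {i j : ℕ} (hi : i ≤ q.length) (hj : j ≤ q.length)
    (hij : i + 2 ≤ j) : G.Adj (q.getVert i) (q.getVert j) := by
  by_contra hadj
  have hne : q.getVert i ≠ q.getVert j := fun h => by
    have := getVert_injOn' hq.1 i hi j hj h; omega
  have hc : (Gᶜ).Adj (q.getVert i) (q.getVert j) := (G.compl_adj _ _).mpr ⟨hne, hadj⟩
  have hedge := hq.2 _ (getVert_mem_support' q i) _ (getVert_mem_support' q j) hc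
  obtain ⟨k, hk, hek⟩ := edges_exists_index' q hedge
  rw [Sym2.eq_iff] at hek
  rcases hek with ⟨h1, h2⟩ | ⟨h1, h2⟩
  · have e1 := getVert_injOn' hq.1 i hi k (by omega) h1
    have e2 := getVert_injOn' hq.1 j hj (k+1) (by omega) h2
    omega
  · have e1 := getVert_injOn' hq.1 i hi (k+1) (by omega) h1
    have e2 := getVert_injOn' hq.1 j hj k (by omega) h2
    omega

end BSP

/-- An antipath of length at least 4 with interior in `X2` has all its vertices
in `X2` except possibly one vertex of `A1 ∪ B1`. -/
theorem antipath_with_interior_in_X2 {V : Type*} (G : SimpleGraph V)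
    (X1 X2 A1 B1 A2 B2 : Set V)
    (hJ : BSP.IsTwoJoinSplit G X1 X2 A1 B1 A2 B2)
    (u v : V) (q : (Gᶜ).Walk u v) (hq : BSP.IsInducedPath Gᶜ q)
    (hlen : 4 ≤ q.length)
    (hint : ∀ x, BSP.Interior q x → x ∈ X2) :
    ∃ a ∈ A1 ∪ B1, ∀ x ∈ q.support, x ∈ X2 ∪ {a} := by
  obtain ⟨hd, hcov, hA1, hB1, hA2, hB2, hdAB1, hdAB2, hneA1, hneB1, hneA2, hneB2,
    hcompA, hcompB, hcross⟩ := hJ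
  set n := q.length with hn
  -- every support vertex is u, v, or in X2
  have hsup : ∀ x ∈ q.support, x = u ∨ x = v ∨ x ∈ X2 := by
    intro x hx
    by_cases h1 : x = u
    · exact Or.inl h1
    by_cases h2 : x = v
    · exact Or.inr (Or.inl h2)
    exact Or.inr (Or.inr (hint x ⟨hx, h1, h2⟩))
  have huv : u ≠ v := by
    intro h
    have := BSP.getVert_injOn' hq.1 0 (by omega) n (le_refl _)
      (by rw [q.getVert_zero, q.getVert_length]; exact h)
    omega
  -- interior getVerts are in X2
  have hintV : ∀ i, 1 ≤ i → i + 1 ≤ n → q.getVert i ∈ X2 := by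
    intro i h1 h2
    refine hint _ ⟨BSP.getVert_mem_support' q i, ?_, ?_⟩
    · intro h
      have := BSP.getVert_injOn' hq.1 i (by omega) 0 (by omega)
        (by rw [q.getVert_zero]; exact h)
      omega
    · intro h
      have := BSP.getVert_injOn' hq.1 i (by omega) n (le_refl _)
        (by rw [q.getVert_length]; exact h)
      omega
  have hg1 : q.getVert 1 ∈ X2 := hintV 1 (by omega) (by omega)
  have hg2 : q.getVert 2 ∈ X2 := hintV 2 (by omega) (by omega)
  -- adjacencies
  have hug2 : G.Adj u (q.getVert 2) := by
    have := BSP.antipath_far_adj hq (i := 0) (j := 2) (by omega) (by omega) (by omega)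
    rwa [q.getVert_zero] at this
  have hvg2 : G.Adj (q.getVert 2) v := by
    have := BSP.antipath_far_adj hq (i := 2) (j := n) (by omega) (le_refl _) (by omega)
    rwa [q.getVert_length] at this
  have hvg1 : G.Adj (q.getVert 1) v := by
    have := BSP.antipath_far_adj hq (i := 1) (j := n) (by omega) (le_refl _) (by omega)
    rwa [q.getVert_length] at this
  have hnug1 : ¬ G.Adj u (q.getVert 1) := by
    have h01 : (Gᶜ).Adj (q.getVert 0) (q.getVert 1) := q.adj_getVert_succ (by omega)
    rw [q.getVert_zero, G.compl_adj] at h01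
    exact h01.2
  -- not both endpoints in X1
  have hnot : ¬ (u ∈ X1 ∧ v ∈ X1) := by
    rintro ⟨hu, hv⟩
    rcases hcross u hu _ hg2 hug2 with ⟨huA, hg2A⟩ | ⟨huB, hg2B⟩
    · rcases hcross v hv _ hg2 hvg2.symm with ⟨hvA, _⟩ | ⟨_, hg2B⟩
      · rcases hcross v hv _ hg1 hvg1.symm with ⟨_, hg1A⟩ | ⟨hvB, _⟩
        · exact hnug1 (hcompA u huA _ hg1A)
        · exact Set.disjoint_left.mp hdAB1 hvA hvB
      · exact Set.disjoint_left.mp hdAB2 hg2A hg2B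
    · rcases hcross v hv _ hg2 hvg2.symm with ⟨_, hg2A⟩ | ⟨hvB, _⟩
      · exact Set.disjoint_left.mp hdAB2 hg2A hg2B
      · rcases hcross v hv _ hg1 hvg1.symm with ⟨hvA, _⟩ | ⟨_, hg1B⟩
        · exact Set.disjoint_left.mp hdAB1 hvA hvB
        · exact hnug1 (hcompB u huB _ hg1B)
  have hX2 : ∀ x : V, x ∉ X1 → x ∈ X2 := by
    intro x hx
    have : x ∈ X1 ∪ X2 := hcov.symm ▸ Set.mem_univ x
    rcases this with h | h
    · exact absurd h hx
    · exact h
  by_cases hu : u ∈ X1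
  · have hv : v ∈ X2 := hX2 v (fun hv => hnot ⟨hu, hv⟩)
    have huAB : u ∈ A1 ∪ B1 := by
      rcases hcross u hu _ hg2 hug2 with ⟨h, _⟩ | ⟨h, _⟩
      · exact Or.inl h
      · exact Or.inr h
    refine ⟨u, huAB, fun x hx => ?_⟩
    rcases hsup x hx with rfl | rfl | h
    · exact Or.inr rfl
    · exact Or.inl hv
    · exact Or.inl h
  · have hu' : u ∈ X2 := hX2 u hu
    by_cases hv : v ∈ X1
    · have hvAB : v ∈ A1 ∪ B1 := by
        rcases hcross v hv _ hg2 hvg2.symm with ⟨h, _⟩ | ⟨h, _⟩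
        · exact Or.inl h
        · exact Or.inr h
      refine ⟨v, hvAB, fun x hx => ?_⟩
      rcases hsup x hx with rfl | rfl | h
      · exact Or.inl hu'
      · exact Or.inr rfl
      · exact Or.inl h
    · obtain ⟨a, ha⟩ := hneA1
      refine ⟨a, Or.inl ha, fun x hx => ?_⟩
      rcases hsup x hx with rfl | rfl | h
      · exact Or.inl hu'
      · exact Or.inl (hX2 _ hv)
      · exact Or.inl h
end
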